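/- With the block setup in the context (k ≥ 1, pairwise commuting nonnegative matrices A_i on V = F ⊔ D ⊔ H with blocks E_i, B_i, D_i as described, and x a nonnegative common eigenvector with D_i x = ρ(D_i) x for all i), suppose the set L := { i ∈ {1,…,k} : ρ(E_i) < ρ(D_i) } is nonempty. Then: (a) for every i ∈ L the matrix ρ(D_i)·1_F − E_i is invertible; (b) for all i, j ∈ L one has (ρ(D_i)·1_F − E_i)⁻¹·(B_i·x) = (ρ(D_j)·1_F − E_j)⁻¹·(B_j·x); (c) writing y for this common vector, y has nonnegative entries; and (d) for every i ∈ {1,…,k}, the vector z on V which equals y on F, x on D and 0 on H satisfies A_i·z = ρ(D_i)·z. -/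

import Mathlib

open Matrix Filter
open scoped ENNReal NNReal Topology

/-- The spectral radius of a real square matrix: the maximum modulus of its
complex eigenvalues. -/
noncomputable def specRad {n : Type*} [Fintype n] [DecidableEq n] (M : Matrix n n ℝ) : ℝ :=
  (spectralRadius ℂ (M.map Complex.ofReal)).toReal

/-- For a matrix on `F ⊕ D ⊕ H`, the top-left `F × F` block `E`. -/
def blockE {F D H : Type*} (M : Matrix (F ⊕ D ⊕ H) (F ⊕ D ⊕ H) ℝ) : Matrix F F ℝ :=
  Matrix.of fun a b => M (Sum.inl a) (Sum.inl b)

/-- For a matrix on `F ⊕ D ⊕ H`, the `F × D` block `B`. -/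
def blockB {F D H : Type*} (M : Matrix (F ⊕ D ⊕ H) (F ⊕ D ⊕ H) ℝ) : Matrix F D ℝ :=
  Matrix.of fun a b => M (Sum.inl a) (Sum.inr (Sum.inl b))

/-- For a matrix on `F ⊕ D ⊕ H`, the central `D × D` block. -/
def blockD {F D H : Type*} (M : Matrix (F ⊕ D ⊕ H) (F ⊕ D ⊕ H) ℝ) : Matrix D D ℝ :=
  Matrix.of fun a b => M (Sum.inr (Sum.inl a)) (Sum.inr (Sum.inl b))


section Neumann

attribute [local instance] Matrix.linftyOpNormedRing Matrix.linftyOpNormedAlgebra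
  Matrix.linftyOpNormedSpace

variable {F : Type*} [Fintype F] [DecidableEq F]

lemma pow_entries_nonneg {M : Matrix F F ℝ} (h : ∀ a b, 0 ≤ M a b) :
    ∀ (n : ℕ) (a b : F), 0 ≤ (M ^ n) a b := by
  intro n
  induction n with
  | zero =>
    intro a b
    by_cases hab : a = b <;> simp [pow_zero, Matrix.one_apply, hab]
  | succ n ih =>
    intro a b
    rw [pow_succ, Matrix.mul_apply]
    exact Finset.sum_nonneg fun c _ => mul_nonneg (ih a c) (h c b)

lemma nnnorm_map_ofReal (M : Matrix F F ℝ) : ‖M.map (Complex.ofReal)‖₊ = ‖M‖₊ := by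
  simp [Matrix.linfty_opNNNorm_def, Matrix.map_apply]

lemma nnnorm_entry_le' (M : Matrix F F ℝ) (a b : F) : ‖M a b‖₊ ≤ ‖M‖₊ := by
  rw [Matrix.linfty_opNNNorm_def]
  exact le_trans
    (Finset.single_le_sum (f := fun j => ‖M a j‖₊) (fun _ _ => zero_le) (Finset.mem_univ b))
    (Finset.le_sup (f := fun i => ∑ j : F, ‖M i j‖₊) (Finset.mem_univ a))

noncomputable def entryCLM (a b : F) : Matrix F F ℝ →L[ℝ] ℝ :=
  LinearMap.mkContinuous
    { toFun := fun M => M a b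
      map_add' := fun _ _ => rfl
      map_smul' := fun _ _ => rfl } 1
    (fun M => by
      rw [one_mul]
      exact_mod_cast nnnorm_entry_le' M a b)

theorem neumann (E : Matrix F F ℝ) (hE : ∀ a b, 0 ≤ E a b) (ρ : ℝ) (hρ : 0 < ρ)
    (h : spectralRadius ℂ (E.map Complex.ofReal) < ENNReal.ofReal ρ) :
    ∃ S : Matrix F F ℝ, (∀ a b, 0 ≤ S a b) ∧
      (ρ • (1 : Matrix F F ℝ) - E) * S = 1 ∧ S * (ρ • (1 : Matrix F F ℝ) - E) = 1 := by
  classical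
  set a : Matrix F F ℝ := ρ⁻¹ • E with ha
  have ha_nonneg : ∀ i j, 0 ≤ a i j := fun i j =>
    mul_nonneg (inv_nonneg.mpr hρ.le) (hE i j)
  obtain ⟨r, hr1, hr2⟩ := ENNReal.lt_iff_exists_nnreal_btwn.mp h
  have hrρ : (r : ℝ) < ρ := by
    have := hr2
    rw [ENNReal.ofReal, ENNReal.coe_lt_coe] at this
    calc (r : ℝ) < (ρ.toNNReal : ℝ) := by exact_mod_cast this
    _ = ρ := Real.coe_toNNReal ρ hρ.le
  have hmap : ∀ n : ℕ, (E ^ n).map (Complex.ofReal) = (E.map Complex.ofReal) ^ n := by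
    intro n
    have := map_pow (Complex.ofRealHom.mapMatrix) E n
    simp only [RingHom.mapMatrix_apply] at this; exact this
  have hG := spectrum.pow_nnnorm_pow_one_div_tendsto_nhds_spectralRadius
    (E.map Complex.ofReal)
  have hev : ∀ᶠ n : ℕ in atTop,
      (‖(E.map Complex.ofReal) ^ n‖₊ : ℝ≥0∞) ^ (1 / (n : ℝ)) < (r : ℝ≥0∞) :=
    hG.eventually_lt_const hr1
  have hev2 : ∀ᶠ n : ℕ in atTop, ‖E ^ n‖₊ < r ^ n := by
    filter_upwards [hev, Filter.eventually_gt_atTop 0] with n hn hn0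
    have hx : (‖E ^ n‖₊ : ℝ≥0∞) < (r : ℝ≥0∞) ^ (n : ℝ) := by
      have h1 : ((‖(E.map Complex.ofReal) ^ n‖₊ : ℝ≥0∞) ^ (1 / (n : ℝ))) ^ (n : ℝ)
          < (r : ℝ≥0∞) ^ (n : ℝ) :=
        ENNReal.rpow_lt_rpow hn (by exact_mod_cast hn0)
      rwa [← ENNReal.rpow_mul, one_div, inv_mul_cancel₀ (by exact_mod_cast hn0.ne'),
        ENNReal.rpow_one, ← hmap, nnnorm_map_ofReal] at h1
    rw [ENNReal.rpow_natCast, ← ENNReal.coe_pow, ENNReal.coe_lt_coe] at hx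
    exact hx
  set t : ℝ := (r : ℝ) / ρ with htdef
  have ht0 : 0 ≤ t := div_nonneg r.coe_nonneg hρ.le
  have ht1 : t < 1 := (div_lt_one hρ).mpr hrρ
  have hbound : ∀ᶠ n : ℕ in atTop, ‖a ^ n‖ ≤ t ^ n := by
    filter_upwards [hev2] with n hn
    have h1 : a ^ n = (ρ⁻¹) ^ n • E ^ n := by
      rw [ha, smul_pow]
    rw [h1, norm_smul, norm_pow, Real.norm_eq_abs, abs_of_nonneg (inv_nonneg.mpr hρ.le)]
    have h2 : ‖E ^ n‖ ≤ (r : ℝ) ^ n := by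
      have := hn.le
      calc ‖E ^ n‖ = ((‖E ^ n‖₊ : ℝ≥0) : ℝ) := by rw [coe_nnnorm]
      _ ≤ ((r ^ n : ℝ≥0) : ℝ) := by exact_mod_cast this
      _ = (r : ℝ) ^ n := by push_cast; ring
    calc ρ⁻¹ ^ n * ‖E ^ n‖ ≤ ρ⁻¹ ^ n * (r : ℝ) ^ n := by
          exact mul_le_mul_of_nonneg_left h2 (pow_nonneg (inv_nonneg.mpr hρ.le) n)
    _ = t ^ n := by rw [htdef, div_pow, inv_pow, div_eq_inv_mul]
  have hsum : Summable (fun n : ℕ => a ^ n) :=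
    Summable.of_norm_bounded_eventually_nat (summable_geometric_of_lt_one ht0 ht1) hbound
  have hs : HasSum (fun n : ℕ => a ^ n) (∑' n : ℕ, a ^ n) := hsum.hasSum
  set S0 : Matrix F F ℝ := ∑' n : ℕ, a ^ n with hS0
  have htend0 : Tendsto (fun n : ℕ => a ^ n) atTop (𝓝 0) := hsum.tendsto_atTop_zero
  have hgeom_l : ∀ N : ℕ, (1 - a) * ∑ n ∈ Finset.range N, a ^ n = 1 - a ^ N := by
    intro N
    have hgs := mul_geom_sum a N
    calc (1 - a) * ∑ n ∈ Finset.range N, a ^ n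
        = -(a - 1) * ∑ n ∈ Finset.range N, a ^ n := by rw [neg_sub]
    _ = -((a - 1) * ∑ n ∈ Finset.range N, a ^ n) := by rw [neg_mul]
    _ = -(a ^ N - 1) := by rw [hgs]
    _ = 1 - a ^ N := by rw [neg_sub]
  have hgeom_r : ∀ N : ℕ, (∑ n ∈ Finset.range N, a ^ n) * (1 - a) = 1 - a ^ N := by
    intro N
    have hgs := geom_sum_mul a N
    calc (∑ n ∈ Finset.range N, a ^ n) * (1 - a)
        = (∑ n ∈ Finset.range N, a ^ n) * (-(a - 1)) := by rw [neg_sub]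
    _ = -((∑ n ∈ Finset.range N, a ^ n) * (a - 1)) := by rw [mul_neg]
    _ = -(a ^ N - 1) := by rw [hgs]
    _ = 1 - a ^ N := by rw [neg_sub]
  have hleft : (1 - a) * S0 = 1 := by
    have h1 : Tendsto (fun N : ℕ => (1 - a) * ∑ n ∈ Finset.range N, a ^ n) atTop
        (𝓝 ((1 - a) * S0)) := (hs.tendsto_sum_nat).const_mul _
    have h2 : Tendsto (fun N : ℕ => (1 - a) * ∑ n ∈ Finset.range N, a ^ n) atTop
        (𝓝 (1 - (0 : Matrix F F ℝ))) := by
      simp_rw [hgeom_l]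
      exact tendsto_const_nhds.sub htend0
    have := tendsto_nhds_unique h1 h2
    rwa [sub_zero] at this
  have hright : S0 * (1 - a) = 1 := by
    have h1 : Tendsto (fun N : ℕ => (∑ n ∈ Finset.range N, a ^ n) * (1 - a)) atTop
        (𝓝 (S0 * (1 - a))) := (hs.tendsto_sum_nat).mul_const _
    have h2 : Tendsto (fun N : ℕ => (∑ n ∈ Finset.range N, a ^ n) * (1 - a)) atTop
        (𝓝 (1 - (0 : Matrix F F ℝ))) := by
      simp_rw [hgeom_r]
      exact tendsto_const_nhds.sub htend0
    have := tendsto_nhds_unique h1 h2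
    rwa [sub_zero] at this
  have hfact : ρ • (1 : Matrix F F ℝ) - E = ρ • (1 - a) := by
    rw [smul_sub, ha, smul_smul, mul_inv_cancel₀ hρ.ne', one_smul]
  refine ⟨ρ⁻¹ • S0, ?_, ?_, ?_⟩
  · intro i j
    have hsij : HasSum (fun n : ℕ => (a ^ n) i j) (S0 i j) := by
      have := (entryCLM i j).hasSum hs
      exact this
    have h0 : (0 : ℝ) ≤ S0 i j :=
      hasSum_le (fun n => pow_entries_nonneg ha_nonneg n i j) hasSum_zero hsij
    have : (ρ⁻¹ • S0) i j = ρ⁻¹ * S0 i j := rfl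
    rw [this]
    exact mul_nonneg (inv_nonneg.mpr hρ.le) h0
  · rw [hfact, Matrix.smul_mul, Matrix.mul_smul, smul_smul, mul_inv_cancel₀ hρ.ne',
      hleft, one_smul]
  · rw [hfact, Matrix.smul_mul, Matrix.mul_smul, smul_smul, inv_mul_cancel₀ hρ.ne',
      hright, one_smul]

end Neumann

section RadLemma

attribute [local instance] Matrix.linftyOpNormedRing Matrix.linftyOpNormedAlgebra
  Matrix.linftyOpNormedSpace

theorem specRad_nonneg {F : Type*} [Fintype F] [DecidableEq F] (M : Matrix F F ℝ) :
    0 ≤ specRad M := ENNReal.toReal_nonneg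

theorem spectralRadius_lt_ofReal {F : Type*} [Fintype F] [DecidableEq F]
    {M : Matrix F F ℝ} {ρ : ℝ} (h : specRad M < ρ) :
    spectralRadius ℂ (M.map Complex.ofReal) < ENNReal.ofReal ρ := by
  have hfin : spectralRadius ℂ (M.map Complex.ofReal) ≠ ⊤ := by
    rcases isEmpty_or_nonempty F with hF | hF
    · rw [spectrum.SpectralRadius.of_subsingleton]
      exact ENNReal.zero_ne_top
    · exact ne_top_of_le_ne_top ENNReal.coe_ne_top
        (spectrum.spectralRadius_le_nnnorm (𝕜 := ℂ) (M.map Complex.ofReal))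
  have h0 : 0 < ρ := lt_of_le_of_lt (specRad_nonneg M) h
  rw [← ENNReal.ofReal_toReal hfin]
  exact (ENNReal.ofReal_lt_ofReal_iff h0).mpr h

end RadLemma

/-- Part (2) of Proposition 4.1: if `L = {i : ρ(E_i) < ρ(D_i)}` is nonempty, then for `i ∈ L`
the matrices `ρ(D_i)·1_F − E_i` are invertible, the vectors
`(ρ(D_i)·1_F − E_i)⁻¹ (B_i x)` agree for all `i ∈ L`, the common vector `y` is nonnegative,
and `z = (y, x, 0)` is an eigenvector of every `A_i` with eigenvalue `ρ(D_i)`. -/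
theorem extend_PF_eigenvector {k : ℕ} (hk : 1 ≤ k)
    {F D H : Type*} [Fintype F] [DecidableEq F] [Fintype D] [DecidableEq D]
    [Fintype H] [DecidableEq H]
    (A : Fin k → Matrix (F ⊕ D ⊕ H) (F ⊕ D ⊕ H) ℝ)
    (hnonneg : ∀ i v w, 0 ≤ A i v w)
    (hcomm : ∀ i j, A i * A j = A j * A i)
    (hDF : ∀ i d f, A i (Sum.inr (Sum.inl d)) (Sum.inl f) = 0)
    (hDH : ∀ i d h, A i (Sum.inr (Sum.inl d)) (Sum.inr (Sum.inr h)) = 0)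
    (hHF : ∀ i h f, A i (Sum.inr (Sum.inr h)) (Sum.inl f) = 0)
    (hHD : ∀ i h d, A i (Sum.inr (Sum.inr h)) (Sum.inr (Sum.inl d)) = 0)
    (x : D → ℝ) (hx : ∀ d, 0 ≤ x d)
    (hxeig : ∀ i, (blockD (A i)).mulVec x = specRad (blockD (A i)) • x)
    (hL : ∃ i, specRad (blockE (A i)) < specRad (blockD (A i))) :
    (∀ i, specRad (blockE (A i)) < specRad (blockD (A i)) →
      IsUnit (specRad (blockD (A i)) • (1 : Matrix F F ℝ) - blockE (A i))) ∧
    (∀ i j, specRad (blockE (A i)) < specRad (blockD (A i)) →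
      specRad (blockE (A j)) < specRad (blockD (A j)) →
      ((specRad (blockD (A i)) • (1 : Matrix F F ℝ) - blockE (A i))⁻¹).mulVec
          ((blockB (A i)).mulVec x) =
        ((specRad (blockD (A j)) • (1 : Matrix F F ℝ) - blockE (A j))⁻¹).mulVec
          ((blockB (A j)).mulVec x)) ∧
    (∀ i₀, specRad (blockE (A i₀)) < specRad (blockD (A i₀)) →
      (∀ f, 0 ≤ ((specRad (blockD (A i₀)) • (1 : Matrix F F ℝ) - blockE (A i₀))⁻¹).mulVec
          ((blockB (A i₀)).mulVec x) f) ∧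
      (∀ i, (A i).mulVec
          (Sum.elim
            (((specRad (blockD (A i₀)) • (1 : Matrix F F ℝ) - blockE (A i₀))⁻¹).mulVec
              ((blockB (A i₀)).mulVec x))
            (Sum.elim x (0 : H → ℝ))) =
        specRad (blockD (A i)) •
          Sum.elim
            (((specRad (blockD (A i₀)) • (1 : Matrix F F ℝ) - blockE (A i₀))⁻¹).mulVec
              ((blockB (A i₀)).mulVec x))
            (Sum.elim x (0 : H → ℝ)))) := by
  classical
  set ρ : Fin k → ℝ := fun i => specRad (blockD (A i)) with hρdef
  set M : Fin k → Matrix F F ℝ := fun i => ρ i • (1 : Matrix F F ℝ) - blockE (A i) with hMdef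
  -- entry expansions of products
  have expandE : ∀ (i j : Fin k) (a : F) (b : F),
      (A i * A j) (Sum.inl a) (Sum.inl b)
        = ∑ f, A i (Sum.inl a) (Sum.inl f) * A j (Sum.inl f) (Sum.inl b) := by
    intro i j a b
    rw [Matrix.mul_apply, Fintype.sum_sum_type, Fintype.sum_sum_type]
    simp [hDF j, hHF j]
  have expandB : ∀ (i j : Fin k) (a : F) (d : D),
      (A i * A j) (Sum.inl a) (Sum.inr (Sum.inl d))
        = (∑ f, A i (Sum.inl a) (Sum.inl f) * A j (Sum.inl f) (Sum.inr (Sum.inl d)))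
          + ∑ d', A i (Sum.inl a) (Sum.inr (Sum.inl d'))
              * A j (Sum.inr (Sum.inl d')) (Sum.inr (Sum.inl d)) := by
    intro i j a d
    rw [Matrix.mul_apply, Fintype.sum_sum_type, Fintype.sum_sum_type]
    simp [hHD j]
  have hEE : ∀ i j, blockE (A i) * blockE (A j) = blockE (A j) * blockE (A i) := by
    intro i j
    ext a b
    have h : (A i * A j) (Sum.inl a) (Sum.inl b) = (A j * A i) (Sum.inl a) (Sum.inl b) := by
      rw [hcomm]
    rw [expandE i j, expandE j i] at h
    simpa [Matrix.mul_apply, blockE] using h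
  have hEB : ∀ i j, blockE (A i) * blockB (A j) + blockB (A i) * blockD (A j)
      = blockE (A j) * blockB (A i) + blockB (A j) * blockD (A i) := by
    intro i j
    ext a d
    have h : (A i * A j) (Sum.inl a) (Sum.inr (Sum.inl d))
        = (A j * A i) (Sum.inl a) (Sum.inr (Sum.inl d)) := by rw [hcomm]
    rw [expandB i j, expandB j i] at h
    simpa [Matrix.add_apply, Matrix.mul_apply, blockE, blockB, blockD] using h
  -- the key vector identity
  have hkey : ∀ i j, (M i).mulVec ((blockB (A j)).mulVec x)
      = (M j).mulVec ((blockB (A i)).mulVec x) := by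
    intro i j
    have h := congrArg (fun N : Matrix F D ℝ => N.mulVec x) (hEB i j)
    simp only [Matrix.add_mulVec, ← Matrix.mulVec_mulVec] at h
    rw [hxeig i, hxeig j] at h
    simp only [Matrix.mulVec_smul] at h
    simp only [hMdef, Matrix.sub_mulVec, Matrix.smul_mulVec, Matrix.one_mulVec]
    funext f
    have hf := congrFun h f
    simp only [Pi.add_apply, Pi.smul_apply, smul_eq_mul, Pi.sub_apply] at hf ⊢
    simp only [hρdef]
    linarith
  -- Neumann inverse for indices in L
  have hNeu : ∀ i, specRad (blockE (A i)) < specRad (blockD (A i)) →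
      ∃ S : Matrix F F ℝ, (∀ a b, 0 ≤ S a b) ∧ M i * S = 1 ∧ S * M i = 1 := by
    intro i hi
    have hρpos : 0 < ρ i := lt_of_le_of_lt (specRad_nonneg _) hi
    obtain ⟨S, h1, h2, h3⟩ := neumann (blockE (A i))
      (fun a b => hnonneg i _ _) (ρ i) hρpos (spectralRadius_lt_ofReal hi)
    exact ⟨S, h1, h2, h3⟩
  -- commutation of the M i
  have hMM : ∀ i j, M i * M j = M j * M i := by
    intro i j
    simp only [hMdef, Matrix.sub_mul, Matrix.mul_sub, Matrix.smul_mul, Matrix.mul_smul,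
      Matrix.one_mul, Matrix.mul_one, hEE i j]
    rw [smul_sub, smul_sub, smul_smul, smul_smul, mul_comm (ρ j) (ρ i)]
    abel
  -- S commutes with every M i
  have hScomm : ∀ (i₀ : Fin k) (S : Matrix F F ℝ), M i₀ * S = 1 → S * M i₀ = 1 →
      ∀ i, S * M i = M i * S := by
    intro i₀ S hl hr i
    calc S * M i = S * M i * (M i₀ * S) := by rw [hl, mul_one]
    _ = S * (M i * M i₀) * S := by noncomm_ring
    _ = S * (M i₀ * M i) * S := by rw [hMM i i₀]
    _ = (S * M i₀) * (M i * S) := by noncomm_ring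
    _ = M i * S := by rw [hr, one_mul]
  -- main claim: M i *ᵥ y = B i *ᵥ x for the candidate y
  have hclaim : ∀ (i₀ : Fin k) (S : Matrix F F ℝ), M i₀ * S = 1 → S * M i₀ = 1 →
      ∀ i, (M i).mulVec (S.mulVec ((blockB (A i₀)).mulVec x)) = (blockB (A i)).mulVec x := by
    intro i₀ S hl hr i
    calc (M i).mulVec (S.mulVec ((blockB (A i₀)).mulVec x))
        = (M i * S).mulVec ((blockB (A i₀)).mulVec x) := by rw [Matrix.mulVec_mulVec]
    _ = (S * M i).mulVec ((blockB (A i₀)).mulVec x) := by rw [hScomm i₀ S hl hr i]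
    _ = S.mulVec ((M i).mulVec ((blockB (A i₀)).mulVec x)) := by rw [← Matrix.mulVec_mulVec]
    _ = S.mulVec ((M i₀).mulVec ((blockB (A i)).mulVec x)) := by rw [hkey i i₀]
    _ = (S * M i₀).mulVec ((blockB (A i)).mulVec x) := by rw [Matrix.mulVec_mulVec]
    _ = (blockB (A i)).mulVec x := by rw [hr, Matrix.one_mulVec]
  have hinv : ∀ (i : Fin k) (S : Matrix F F ℝ), M i * S = 1 → (M i)⁻¹ = S := by
    intro i S hl
    exact Matrix.inv_eq_right_inv hl
  refine ⟨?_, ?_, ?_⟩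
  · intro i hi
    obtain ⟨S, _, h2, h3⟩ := hNeu i hi
    exact ⟨⟨M i, S, h2, h3⟩, rfl⟩
  · intro i j hi hj
    obtain ⟨Si, _, hi2, hi3⟩ := hNeu i hi
    obtain ⟨Sj, _, hj2, hj3⟩ := hNeu j hj
    rw [show (specRad (blockD (A i)) • (1 : Matrix F F ℝ) - blockE (A i))⁻¹ = Si from
        hinv i Si hi2,
      show (specRad (blockD (A j)) • (1 : Matrix F F ℝ) - blockE (A j))⁻¹ = Sj from
        hinv j Sj hj2]
    have h1 : (M j).mulVec (Si.mulVec ((blockB (A i)).mulVec x)) = (blockB (A j)).mulVec x :=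
      hclaim i Si hi2 hi3 j
    calc Si.mulVec ((blockB (A i)).mulVec x)
        = (1 : Matrix F F ℝ).mulVec (Si.mulVec ((blockB (A i)).mulVec x)) := by
          rw [Matrix.one_mulVec]
    _ = (Sj * M j).mulVec (Si.mulVec ((blockB (A i)).mulVec x)) := by rw [hj3]
    _ = Sj.mulVec ((M j).mulVec (Si.mulVec ((blockB (A i)).mulVec x))) := by
          rw [← Matrix.mulVec_mulVec]
    _ = Sj.mulVec ((blockB (A j)).mulVec x) := by rw [h1]
  · intro i₀ hi₀
    obtain ⟨S, hS1, hS2, hS3⟩ := hNeu i₀ hi₀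
    rw [show (specRad (blockD (A i₀)) • (1 : Matrix F F ℝ) - blockE (A i₀))⁻¹ = S from
        hinv i₀ S hS2]
    constructor
    · intro f
      simp only [Matrix.mulVec, dotProduct]
      refine Finset.sum_nonneg fun b _ => mul_nonneg (hS1 f b) ?_
      exact Finset.sum_nonneg fun d _ => mul_nonneg (hnonneg i₀ _ _) (hx d)
    · intro i
      have hy : (M i).mulVec (S.mulVec ((blockB (A i₀)).mulVec x)) = (blockB (A i)).mulVec x :=
        hclaim i₀ S hS2 hS3 i
      set y : F → ℝ := S.mulVec ((blockB (A i₀)).mulVec x) with hydef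
      have hy2 : ρ i • y - blockE (A i) *ᵥ y = blockB (A i) *ᵥ x := by
        rw [← hy]
        simp only [hMdef, Matrix.sub_mulVec, Matrix.smul_mulVec, Matrix.one_mulVec]
      have hyf : ∀ f, ρ i * y f - ∑ f', A i (Sum.inl f) (Sum.inl f') * y f'
          = ∑ d, A i (Sum.inl f) (Sum.inr (Sum.inl d)) * x d := by
        intro f
        have := congrFun hy2 f
        simp only [Pi.sub_apply, Pi.smul_apply, smul_eq_mul, Matrix.mulVec,
          dotProduct, blockE, blockB, Matrix.of_apply] at this
        exact this
      have hxd : ∀ d, ∑ d', A i (Sum.inr (Sum.inl d)) (Sum.inr (Sum.inl d')) * x d'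
          = ρ i * x d := by
        intro d
        have := congrFun (hxeig i) d
        simp only [Matrix.mulVec, dotProduct, blockD, Matrix.of_apply,
          Pi.smul_apply, smul_eq_mul] at this
        exact this
      funext v
      match v with
      | Sum.inl f =>
        have h1 := hyf f
        simp only [Matrix.mulVec, dotProduct, Fintype.sum_sum_type, Sum.elim_inl,
          Sum.elim_inr, Pi.smul_apply, smul_eq_mul, Pi.zero_apply, mul_zero,
          Finset.sum_const_zero, add_zero]
        simp only [hρdef] at h1
        linarith
      | Sum.inr (Sum.inl d) =>
        have h1 := hxd d
        simp only [Matrix.mulVec, dotProduct, Fintype.sum_sum_type, Sum.elim_inl,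
          Sum.elim_inr, Pi.smul_apply, smul_eq_mul, Pi.zero_apply, mul_zero,
          Finset.sum_const_zero, add_zero, hDF i, zero_mul, zero_add]
        simp only [hρdef] at h1
        linarith
      | Sum.inr (Sum.inr h) =>
        simp only [Matrix.mulVec, dotProduct, Fintype.sum_sum_type, Sum.elim_inl,
          Sum.elim_inr, Pi.smul_apply, smul_eq_mul, Pi.zero_apply, mul_zero,
          Finset.sum_const_zero, add_zero, hHF i, hHD i, zero_mul]
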